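/- Upper volume bound for covering via L² norms: for f, g ∈ LC_g(ℝⁿ), N(f, g) ≤ 2ⁿ · (∫ f²(x) dx) / ‖f*g‖_∞, where (f*g)(x) = ∫ f(y)g(x−y) dy. In particular, the measure with Lebesgue density x ↦ f²((x+x₀)/2)/‖f*g‖_∞, where ‖f*g‖_∞ = (f*g)(x₀), is a covering measure of f by g. -/

import Mathlib

open MeasureTheory ENNReal NNReal

noncomputable section

/-- The ambient space `ℝⁿ`. -/
abbrev Vn (n : ℕ) := EuclideanSpace ℝ (Fin n)

/-- Convolution of a (nonnegative Borel) measure with a `[0,∞]`-valued function: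
`(μ * g)(x) = ∫ g(x - t) dμ(t)`. -/
def mconv {n : ℕ} (μ : Measure (Vn n)) (g : Vn n → ℝ≥0∞) (x : Vn n) : ℝ≥0∞ :=
  ∫⁻ t, g (x - t) ∂μ

/-- `μ` is a covering measure of `f` by `g` : `μ * g ≥ f` pointwise. -/
def Covers {n : ℕ} (μ : Measure (Vn n)) (g f : Vn n → ℝ≥0∞) : Prop :=
  ∀ x, f x ≤ mconv μ g x

/-- `ρ` is a `g`-separated measure with respect to `h` : `ρ * g ≤ h` pointwise. -/
def Separated {n : ℕ} (ρ : Measure (Vn n)) (g h : Vn n → ℝ≥0∞) : Prop :=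
  ∀ x, mconv ρ g x ≤ h x

/-- The `h`-covering number of `f` by `g`:
`N(f,g,h) = inf {∫ h dμ : μ * g ≥ f}`. -/
def covN {n : ℕ} (f g h : Vn n → ℝ≥0∞) : ℝ≥0∞ :=
  ⨅ μ : {μ : Measure (Vn n) // Covers μ g f}, ∫⁻ x, h x ∂μ.1

/-- The `h`-separation number of `f` by `g`:
`M(f,g,h) = sup {∫ f dρ : ρ * g ≤ h}`. -/
def sepM {n : ℕ} (f g h : Vn n → ℝ≥0∞) : ℝ≥0∞ :=
  ⨆ ρ : {ρ : Measure (Vn n) // Separated ρ g h}, ∫⁻ x, f x ∂ρ.1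

/-- Geometric log-concave functions: upper semicontinuous, `0 ≤ f ≤ 1`,
`f(0) = max f = 1`, log-concave, with finite positive integral. -/
structure IsLCg {n : ℕ} (f : Vn n → ℝ) : Prop where
  usc : UpperSemicontinuous f
  nonneg : ∀ x, 0 ≤ f x
  le_one : ∀ x, f x ≤ 1
  at_zero : f 0 = 1
  logconcave : ∀ x y : Vn n, ∀ t : ℝ, 0 ≤ t → t ≤ 1 →
    f x ^ t * f y ^ (1 - t) ≤ f (t • x + (1 - t) • y)
  int_pos : 0 < ∫⁻ x, ENNReal.ofReal (f x)
  int_fin : ∫⁻ x, ENNReal.ofReal (f x) < ∞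


/-- Convolution of two functions, as a `[0,∞]`-valued function. -/
def fconv {n : ℕ} (f g : Vn n → ℝ) (x : Vn n) : ℝ≥0∞ :=
  ∫⁻ y, ENNReal.ofReal (f y) * ENNReal.ofReal (g (x - y))

lemma lint_half {n : ℕ} (H : Vn n → ℝ≥0∞) (hH : Measurable H) (c : Vn n) :
    ∫⁻ t : Vn n, H ((2:ℝ)⁻¹ • (t + c)) = 2 ^ n * ∫⁻ y, H y := by
  have h1 : ∫⁻ t : Vn n, H ((2:ℝ)⁻¹ • (t + c)) = ∫⁻ s : Vn n, H ((2:ℝ)⁻¹ • s) :=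
    lintegral_add_right_eq_self (fun s => H ((2:ℝ)⁻¹ • s)) c
  have h2 : ∫⁻ y, H y ∂(Measure.map (((2:ℝ)⁻¹) • ·) (volume : Measure (Vn n)))
      = ∫⁻ s : Vn n, H ((2:ℝ)⁻¹ • s) :=
    lintegral_map hH (measurable_const_smul _)
  rw [Measure.map_addHaar_smul volume (by norm_num : ((2:ℝ)⁻¹) ≠ 0)] at h2
  rw [lintegral_smul_measure] at h2
  rw [h1, ← h2, finrank_euclideanSpace_fin]
  congr 1
  rw [abs_of_nonneg (by positivity)]
  rw [← inv_pow, inv_inv, ENNReal.ofReal_pow (by norm_num)]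
  norm_num

lemma lcg_sq {n : ℕ} {f : Vn n → ℝ} (hf : IsLCg f) (a b : Vn n) :
    f a * f b ≤ f ((2:ℝ)⁻¹ • (a + b)) ^ 2 := by
  have h := hf.logconcave a b (2⁻¹ : ℝ) (by norm_num) (by norm_num)
  have hh : (1 : ℝ) - 2⁻¹ = 2⁻¹ := by norm_num
  rw [hh, ← smul_add] at h
  have h2 : (f a ^ ((2:ℝ)⁻¹) * f b ^ ((2:ℝ)⁻¹)) ^ 2 ≤ f ((2:ℝ)⁻¹ • (a + b)) ^ 2 :=
    pow_le_pow_left₀ (mul_nonneg (Real.rpow_nonneg (hf.nonneg a) _) (Real.rpow_nonneg (hf.nonneg b) _)) h 2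
  calc f a * f b = (f a ^ ((2:ℝ)⁻¹) * f b ^ ((2:ℝ)⁻¹)) ^ 2 := by
        rw [mul_pow, ← Real.rpow_natCast (f a ^ ((2:ℝ)⁻¹)) 2,
          ← Real.rpow_natCast (f b ^ ((2:ℝ)⁻¹)) 2,
          ← Real.rpow_mul (hf.nonneg a), ← Real.rpow_mul (hf.nonneg b)]
        norm_num
    _ ≤ _ := h2

lemma fconv_fin {n : ℕ} {f g : Vn n → ℝ} (hf : IsLCg f) (hg : IsLCg g) (x : Vn n) :
    fconv f g x < ∞ := by
  refine lt_of_le_of_lt (lintegral_mono fun y => ?_) hf.int_fin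
  calc ENNReal.ofReal (f y) * ENNReal.ofReal (g (x - y))
      ≤ ENNReal.ofReal (f y) * 1 :=
        mul_le_mul_right (ENNReal.ofReal_le_one.mpr (hg.le_one _)) _
    _ = ENNReal.ofReal (f y) := mul_one _

lemma fconv_max_pos {n : ℕ} {f g : Vn n → ℝ} (hf : IsLCg f) (hg : IsLCg g) (x₀ : Vn n)
    (hx₀ : ∀ x, fconv f g x ≤ fconv f g x₀) : 0 < fconv f g x₀ := by
  by_contra h
  push_neg at h
  have hC0 : fconv f g x₀ = 0 := le_antisymm h zero_le
  have hall : ∀ x, fconv f g x = 0 := fun x => le_antisymm (hC0 ▸ hx₀ x) zero_le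
  have hmf : Measurable fun y => ENNReal.ofReal (f y) :=
    ENNReal.measurable_ofReal.comp hf.usc.measurable
  have hmg : Measurable fun y => ENNReal.ofReal (g y) :=
    ENNReal.measurable_ofReal.comp hg.usc.measurable
  have hswap : ∫⁻ x, fconv f g x =
      ∫⁻ y, ∫⁻ x, ENNReal.ofReal (f y) * ENNReal.ofReal (g (x - y)) := by
    apply lintegral_lintegral_swap
    exact ((hmf.comp measurable_snd).mul
      (hmg.comp (measurable_fst.sub measurable_snd))).aemeasurable
  have hinner : ∀ y : Vn n, ∫⁻ x, ENNReal.ofReal (f y) * ENNReal.ofReal (g (x - y))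
      = ENNReal.ofReal (f y) * ∫⁻ x, ENNReal.ofReal (g x) := by
    intro y
    rw [lintegral_const_mul _ (show Measurable fun x : Vn n => ENNReal.ofReal (g (x - y)) from hmg.comp (measurable_sub_const y))]
    congr 1
    simp_rw [sub_eq_add_neg]
    exact lintegral_add_right_eq_self (fun x => ENNReal.ofReal (g x)) (-y)
  have : ∫⁻ x : Vn n, fconv f g x
      = (∫⁻ y, ENNReal.ofReal (f y)) * ∫⁻ x, ENNReal.ofReal (g x) := by
    rw [hswap]
    simp_rw [hinner]
    rw [lintegral_mul_const _ hmf]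
  simp only [hall, lintegral_zero] at this
  exact (mul_pos hf.int_pos.ne' hg.int_pos.ne').ne' this.symm

/-- Upper volume bound via L² norms: for `f, g ∈ LC_g(ℝⁿ)`, if `x₀` attains the
supremum of `f * g`, then the measure with density `x ↦ f²((x+x₀)/2)/‖f*g‖_∞`
covers `f` by `g`, and `N(f, g) ≤ 2ⁿ (∫ f²) / ‖f*g‖_∞`. -/
theorem covN_upper_L2_bound {n : ℕ} (f g : Vn n → ℝ) (hf : IsLCg f) (hg : IsLCg g)
    (x₀ : Vn n) (hx₀ : ∀ x, fconv f g x ≤ fconv f g x₀) :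
    Covers (volume.withDensity
        (fun x => ENNReal.ofReal (f ((2:ℝ)⁻¹ • (x + x₀)) ^ 2) / fconv f g x₀))
        (fun x => ENNReal.ofReal (g x)) (fun x => ENNReal.ofReal (f x)) ∧
      covN (fun x => ENNReal.ofReal (f x)) (fun x => ENNReal.ofReal (g x)) (fun _ => 1) ≤
        2 ^ n * (∫⁻ x, ENNReal.ofReal (f x ^ 2)) / fconv f g x₀ := by
  set C := fconv f g x₀ with hC
  have hCpos : C ≠ 0 := (fconv_max_pos hf hg x₀ hx₀).ne'
  have hCfin : C ≠ ∞ := (fconv_fin hf hg x₀).ne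
  have hmf : Measurable fun y => ENNReal.ofReal (f y) :=
    ENNReal.measurable_ofReal.comp hf.usc.measurable
  have hmg : Measurable fun y => ENNReal.ofReal (g y) :=
    ENNReal.measurable_ofReal.comp hg.usc.measurable
  set d : Vn n → ℝ≥0∞ := fun t => ENNReal.ofReal (f ((2:ℝ)⁻¹ • (t + x₀)) ^ 2) / C with hd
  have hmd2 : Measurable fun t : Vn n => ENNReal.ofReal (f ((2:ℝ)⁻¹ • (t + x₀)) ^ 2) := by
    apply ENNReal.measurable_ofReal.comp
    exact (hf.usc.measurable.comp ((measurable_add_const x₀).const_smul ((2:ℝ)⁻¹))).pow_const 2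
  have hmd : Measurable d := hmd2.div_const C
  have hcov : Covers (volume.withDensity d)
      (fun x => ENNReal.ofReal (g x)) (fun x => ENNReal.ofReal (f x)) := by
    intro x
    have hgx : Measurable fun t : Vn n => ENNReal.ofReal (g (x - t)) :=
      hmg.comp (measurable_const.sub measurable_id)
    have hrw : mconv (volume.withDensity d) (fun x => ENNReal.ofReal (g x)) x
        = ∫⁻ t, d t * ENNReal.ofReal (g (x - t)) :=
      lintegral_withDensity_eq_lintegral_mul volume hmd hgx
    rw [hrw]
    have key : ∀ t : Vn n, ENNReal.ofReal (f x) * (ENNReal.ofReal (f (x₀ - (x - t))) *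
        ENNReal.ofReal (g (x - t)))
        ≤ ENNReal.ofReal (f ((2:ℝ)⁻¹ • (t + x₀)) ^ 2) * ENNReal.ofReal (g (x - t)) := by
      intro t
      rw [← mul_assoc, ← ENNReal.ofReal_mul (hf.nonneg x)]
      refine mul_le_mul_left (ENNReal.ofReal_le_ofReal ?_) _
      have := lcg_sq hf x (x₀ - (x - t))
      have harg : x + (x₀ - (x - t)) = t + x₀ := by abel
      rwa [harg] at this
    have hm1 : Measurable fun y : Vn n =>
        ENNReal.ofReal (f (x₀ - y)) * ENNReal.ofReal (g y) :=
      (hmf.comp (measurable_const.sub measurable_id)).mul hmg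
    have hm0 : Measurable fun t : Vn n =>
        ENNReal.ofReal (f (x₀ - (x - t))) * ENNReal.ofReal (g (x - t)) :=
      (hmf.comp (measurable_const.sub (measurable_const.sub measurable_id))).mul hgx
    have hfin : (∫⁻ t, ENNReal.ofReal (f (x₀ - (x - t))) * ENNReal.ofReal (g (x - t))) = C := by
      calc (∫⁻ t, ENNReal.ofReal (f (x₀ - (x - t))) * ENNReal.ofReal (g (x - t)))
          = ∫⁻ y, ENNReal.ofReal (f (x₀ - y)) * ENNReal.ofReal (g y) :=
            (Measure.measurePreserving_sub_left volume x).lintegral_comp hm1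
        _ = ∫⁻ t, ENNReal.ofReal (f (x₀ - (x₀ - t))) * ENNReal.ofReal (g (x₀ - t)) :=
            ((Measure.measurePreserving_sub_left volume x₀).lintegral_comp hm1).symm
        _ = ∫⁻ t, ENNReal.ofReal (f t) * ENNReal.ofReal (g (x₀ - t)) :=
            lintegral_congr fun t => by rw [_root_.sub_sub_cancel]
        _ = C := rfl
    calc ENNReal.ofReal (f x)
        = ENNReal.ofReal (f x) * C * C⁻¹ := by
          rw [mul_assoc, ENNReal.mul_inv_cancel hCpos hCfin, mul_one]
      _ = (∫⁻ t, ENNReal.ofReal (f x) * (ENNReal.ofReal (f (x₀ - (x - t))) *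
            ENNReal.ofReal (g (x - t)))) * C⁻¹ := by
          congr 1
          rw [← hfin]
          exact (lintegral_const_mul _ hm0).symm
      _ ≤ (∫⁻ t, ENNReal.ofReal (f ((2:ℝ)⁻¹ • (t + x₀)) ^ 2) * ENNReal.ofReal (g (x - t)))
            * C⁻¹ := mul_le_mul_left (lintegral_mono key) _
      _ = ∫⁻ t, (ENNReal.ofReal (f ((2:ℝ)⁻¹ • (t + x₀)) ^ 2) * ENNReal.ofReal (g (x - t)))
            * C⁻¹ := (lintegral_mul_const _ (hmd2.mul hgx)).symm
      _ = ∫⁻ t, d t * ENNReal.ofReal (g (x - t)) := lintegral_congr fun t => by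
            rw [hd]
            simp only [ENNReal.div_eq_inv_mul]
            ring
  refine ⟨hcov, ?_⟩
  have hle := iInf_le (fun μ : {μ : Measure (Vn n) // Covers μ
      (fun x => ENNReal.ofReal (g x)) (fun x => ENNReal.ofReal (f x))} => ∫⁻ x, (1:ℝ≥0∞) ∂μ.1)
    ⟨volume.withDensity d, hcov⟩
  refine le_trans hle ?_
  rw [lintegral_one]
  have hμuniv : (volume.withDensity d) Set.univ
      = (∫⁻ t, ENNReal.ofReal (f ((2:ℝ)⁻¹ • (t + x₀)) ^ 2)) * C⁻¹ := by
    rw [withDensity_apply _ MeasurableSet.univ, setLIntegral_univ]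
    calc ∫⁻ t, d t = ∫⁻ t, ENNReal.ofReal (f ((2:ℝ)⁻¹ • (t + x₀)) ^ 2) * C⁻¹ :=
          lintegral_congr fun t => by simp only [hd, ENNReal.div_eq_inv_mul]; rw [mul_comm]
      _ = _ := lintegral_mul_const _ hmd2
  rw [hμuniv]
  have hscale : (∫⁻ t, ENNReal.ofReal (f ((2:ℝ)⁻¹ • (t + x₀)) ^ 2))
      = 2 ^ n * ∫⁻ y, ENNReal.ofReal (f y ^ 2) :=
    lint_half (fun y => ENNReal.ofReal (f y ^ 2))
      (ENNReal.measurable_ofReal.comp (hf.usc.measurable.pow_const 2)) x₀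
  rw [hscale, ENNReal.div_eq_inv_mul]
  exact le_of_eq (mul_comm _ _)
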